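/- Any two distinct blocks E, F of a noncrossing linked partition π of {1,...,n} have at most one element in common; moreover, if E ∩ F ≠ ∅ then both E and F have at least two elements. -/
import Mathlib


attribute [local instance] Classical.propDecidable

noncomputable section

/-- Two subsets `E`, `F` of `{1,...,n}` are crossing if there exist
`i₁ < j₁ < i₂ < j₂` with `i₁, i₂ ∈ E` and `j₁, j₂ ∈ F`. -/
def Crossing (E F : Finset ℕ) : Prop :=
  ∃ i₁ ∈ E, ∃ i₂ ∈ E, ∃ j₁ ∈ F, ∃ j₂ ∈ F, i₁ < j₁ ∧ j₁ < i₂ ∧ i₂ < j₂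

/-- `i` is the minimum element of `E`. -/
def IsMinOf (i : ℕ) (E : Finset ℕ) : Prop := i ∈ E ∧ ∀ j ∈ E, i ≤ j

/-- `E` and `F` are nearly disjoint. -/
def NearlyDisjoint (E F : Finset ℕ) : Prop :=
  ∀ i ∈ E ∩ F,
    (IsMinOf i E ∧ 1 < E.card ∧ ¬ IsMinOf i F) ∨
    (¬ IsMinOf i E ∧ IsMinOf i F ∧ 1 < F.card)

/-- `π` is a noncrossing linked partition of `{1,...,n}`. -/
def IsNCL (n : ℕ) (π : Finset (Finset ℕ)) : Prop :=
  (∀ E ∈ π, E.Nonempty) ∧ π.biUnion id = Finset.Icc 1 n ∧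
    ∀ E ∈ π, ∀ F ∈ π, E ≠ F → ¬ Crossing E F ∧ NearlyDisjoint E F

/-- `π` is a noncrossing partition of `{1,...,n}`. -/
def IsNC (n : ℕ) (π : Finset (Finset ℕ)) : Prop :=
  (∀ E ∈ π, E.Nonempty) ∧ π.biUnion id = Finset.Icc 1 n ∧
    ∀ E ∈ π, ∀ F ∈ π, E ≠ F → Disjoint E F ∧ ¬ Crossing E F

/-- The order on (linked) partitions: every block of `π` is contained in a block of `σ`. -/
def NCLle (π σ : Finset (Finset ℕ)) : Prop := ∀ E ∈ π, ∃ E' ∈ σ, E ⊆ E'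

/-- The finset of all noncrossing linked partitions of `{1,...,n}`. -/
def NCLset (n : ℕ) : Finset (Finset (Finset ℕ)) :=
  ((Finset.Icc 1 n).powerset.powerset).filter (IsNCL n)

/-- The finset of all noncrossing partitions of `{1,...,n}`. -/
def NCset (n : ℕ) : Finset (Finset (Finset ℕ)) :=
  ((Finset.Icc 1 n).powerset.powerset).filter (IsNC n)

/-- Two distinct blocks of a noncrossing linked partition have at most one common
element; moreover, if they intersect then both have at least two elements. -/
theorem NCL_blocks_intersection {n : ℕ} {π : Finset (Finset ℕ)} (hπ : IsNCL n π)
    {E F : Finset ℕ} (hE : E ∈ π) (hF : F ∈ π) (hEF : E ≠ F) :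
    (E ∩ F).card ≤ 1 ∧ ((E ∩ F).Nonempty → 2 ≤ E.card ∧ 2 ≤ F.card) := by
  obtain ⟨-, -, hpairs⟩ := hπ
  have hnd : NearlyDisjoint E F := (hpairs E hE F hF hEF).2
  constructor
  · -- at most one common element
    by_contra h
    push_neg at h
    obtain ⟨i, hi, j, hj, hij⟩ := Finset.one_lt_card.mp h
    have hi' := hnd i hi
    have hj' := hnd j hj
    rw [Finset.mem_inter] at hi hj
    have key : ∀ a b : ℕ, a ∈ E → a ∈ F → b ∈ E → b ∈ F →
        IsMinOf a E → IsMinOf b F → a = b := by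
      intro a b haE haF hbE hbF hma hmb
      exact le_antisymm (hma.2 b hbE) (hmb.2 a haF)
    rcases hi' with ⟨hiE, -, -⟩ | ⟨-, hiF, -⟩ <;>
      rcases hj' with ⟨hjE, -, -⟩ | ⟨-, hjF, -⟩
    · exact hij (le_antisymm (hiE.2 j hj.1) (hjE.2 i hi.1))
    · exact hij (key i j hi.1 hi.2 hj.1 hj.2 hiE hjF)
    · exact hij (key j i hj.1 hj.2 hi.1 hi.2 hjE hiF).symm
    · exact hij (le_antisymm (hiF.2 j hj.2) (hjF.2 i hi.2))
  · rintro ⟨i, hi⟩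
    have hi' := hnd i hi
    rw [Finset.mem_inter] at hi
    rcases hi' with ⟨hminE, hcE, hnminF⟩ | ⟨hnminE, hminF, hcF⟩
    · refine ⟨hcE, ?_⟩
      by_contra h
      push_neg at h
      exact hnminF ⟨hi.2, fun j hj => by
        have := Finset.card_le_one.mp (by omega) i hi.2 j hj; omega⟩
    · refine ⟨?_, hcF⟩
      by_contra h
      push_neg at h
      exact hnminE ⟨hi.1, fun j hj => by
        have := Finset.card_le_one.mp (by omega) i hi.1 j hj; omega⟩
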